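/- Let a directed network be given by a finite nonempty vertex set V, a finite link index set Λ with source and target maps s, t : Λ → V, and nonnegative delays τ : Λ → ℝ, τ(ℓ) ≥ 0 for all ℓ. Assume the underlying undirected graph is connected, i.e. any two vertices are joined by a finite path of links each traversed in either direction. Then there exists a time-shift vector η : V → ℝ such that the transformed delays τ̃(ℓ) = τ(ℓ) + η(s(ℓ)) − η(t(ℓ)) satisfy: (a) τ̃(ℓ) ≥ 0 for every link ℓ, and (b) the set of links with τ̃(ℓ) = 0 spans the network, i.e. any two vertices of V are joined by a finite path consisting only of links with τ̃(ℓ) = 0, each traversed in either direction (equivalently, the zero-delay links contain a spanning tree of the underlying graph). -/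

import Mathlib

/-- `linkRel s t P a b` holds if some link `ℓ` satisfying the predicate `P`
joins the vertices `a` and `b` (traversed in either direction). -/
def linkRel {V Λ : Type*} (s t : Λ → V) (P : Λ → Prop) (a b : V) : Prop :=
  ∃ ℓ : Λ, P ℓ ∧ ((s ℓ = a ∧ t ℓ = b) ∨ (s ℓ = b ∧ t ℓ = a))

/-- **Existence of a nonnegative reduction with a spanning set of instantaneous
links.** In a finite connected network with nonnegative delays, there is a
time-shift vector `η` such that all transformed delays
`τ̃(ℓ) = τ(ℓ) + η(s(ℓ)) − η(t(ℓ))` are nonnegative and the links with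
`τ̃(ℓ) = 0` span the network (any two vertices are joined by an undirected path
of instantaneous links). -/
theorem exists_timeshift_nonneg_spanning_zero_links
    {V Λ : Type*} [Fintype V] [Nonempty V] [Fintype Λ]
    (s t : Λ → V) (τ : Λ → ℝ) (hτ : ∀ ℓ, 0 ≤ τ ℓ)
    (hconn : ∀ a b : V, Relation.ReflTransGen (linkRel s t (fun _ => True)) a b) :
    ∃ η : V → ℝ,
      (∀ ℓ, 0 ≤ τ ℓ + η (s ℓ) - η (t ℓ)) ∧
      (∀ a b : V, Relation.ReflTransGen
        (linkRel s t (fun ℓ => τ ℓ + η (s ℓ) - η (t ℓ) = 0)) a b) := by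
  classical
  obtain ⟨v₀⟩ := ‹Nonempty V›
  -- zero-link relation for a given shift η
  set R : (V → ℝ) → V → V → Prop :=
    fun η => linkRel s t (fun ℓ => τ ℓ + η (s ℓ) - η (t ℓ) = 0) with hRdef
  have hRsymm : ∀ η : V → ℝ, Symmetric (R η) := by
    rintro η a b ⟨ℓ, hℓ, h⟩
    exact ⟨ℓ, hℓ, h.symm⟩
  -- the set of vertices reachable from v₀ by zero links
  set S : (V → ℝ) → Finset V :=
    fun η => Finset.univ.filter (fun v => Relation.ReflTransGen (R η) v₀ v) with hSdef
  have hmemS : ∀ η v, v ∈ S η ↔ Relation.ReflTransGen (R η) v₀ v := by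
    intro η v; simp [hSdef]
  have hv₀ : ∀ η, v₀ ∈ S η := fun η => (hmemS η v₀).2 .refl
  -- S is closed under zero links
  have hclosed : ∀ η a b, a ∈ S η → R η a b → b ∈ S η := by
    intro η a b ha hab
    exact (hmemS η b).2 (((hmemS η a).1 ha).tail hab)
  -- the key augmentation step
  have step : ∀ η : V → ℝ, (∀ ℓ, 0 ≤ τ ℓ + η (s ℓ) - η (t ℓ)) → S η ≠ Finset.univ →
      ∃ η' : V → ℝ, (∀ ℓ, 0 ≤ τ ℓ + η' (s ℓ) - η' (t ℓ)) ∧ (S η).card < (S η').card := by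
    intro η hpos hne
    -- find a crossing link
    have hb : ∃ b, b ∉ S η := by
      by_contra h
      push_neg at h
      exact hne (Finset.eq_univ_of_forall h)
    obtain ⟨b, hbS⟩ := hb
    have cross : ∃ ℓ, (s ℓ ∈ S η ∧ t ℓ ∉ S η) ∨ (t ℓ ∈ S η ∧ s ℓ ∉ S η) := by
      have h := hconn v₀ b
      have : ∀ x, Relation.ReflTransGen (linkRel s t (fun _ => True)) x b → x ∈ S η →
          ∃ ℓ, (s ℓ ∈ S η ∧ t ℓ ∉ S η) ∨ (t ℓ ∈ S η ∧ s ℓ ∉ S η) := by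
        intro x h
        induction h using Relation.ReflTransGen.head_induction_on with
        | refl => intro hx; exact absurd hx hbS
        | head hstep _ ih =>
          rename_i x c _
          intro hx
          by_cases hc : c ∈ S η
          · exact ih hc
          · obtain ⟨ℓ, -, hor⟩ := hstep
            rcases hor with ⟨hs, ht⟩ | ⟨hs, ht⟩
            · exact ⟨ℓ, Or.inl ⟨hs ▸ hx, ht ▸ hc⟩⟩
            · exact ⟨ℓ, Or.inr ⟨ht ▸ hx, hs ▸ hc⟩⟩
      exact this v₀ h (hv₀ η)
    -- crossing links have strictly positive transformed delay
    have hcrosspos : ∀ ℓ, ((s ℓ ∈ S η ∧ t ℓ ∉ S η) ∨ (t ℓ ∈ S η ∧ s ℓ ∉ S η)) →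
        0 < τ ℓ + η (s ℓ) - η (t ℓ) := by
      intro ℓ hor
      rcases lt_or_eq_of_le (hpos ℓ) with h | h
      · exact h
      · exfalso
        have hz : R η (s ℓ) (t ℓ) := ⟨ℓ, h.symm, Or.inl ⟨rfl, rfl⟩⟩
        rcases hor with ⟨hs, ht⟩ | ⟨ht, hs⟩
        · exact ht (hclosed η _ _ hs hz)
        · exact hs (hclosed η _ _ ht (hRsymm η hz))
    -- choose a constant c and a link ℓ₀ to tighten
    obtain ⟨c, ℓ₀, hℓ₀cross, hℓ₀tight, hc⟩ :
        ∃ (c : ℝ) (ℓ₀ : Λ),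
          ((s ℓ₀ ∈ S η ∧ t ℓ₀ ∉ S η) ∨ (t ℓ₀ ∈ S η ∧ s ℓ₀ ∉ S η)) ∧
          (τ ℓ₀ + η (s ℓ₀) - η (t ℓ₀)
            + ((if s ℓ₀ ∈ S η then c else 0) - (if t ℓ₀ ∈ S η then c else 0)) = 0) ∧
          (∀ ℓ, 0 ≤ τ ℓ + η (s ℓ) - η (t ℓ)
            + ((if s ℓ ∈ S η then c else 0) - (if t ℓ ∈ S η then c else 0))) := by
      by_cases hin : (Finset.univ.filter (fun ℓ => s ℓ ∉ S η ∧ t ℓ ∈ S η)).Nonempty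
      · obtain ⟨ℓ₀, hℓ₀, hmin⟩ := Finset.exists_min_image _
          (fun ℓ => τ ℓ + η (s ℓ) - η (t ℓ)) hin
        simp only [Finset.mem_filter, Finset.mem_univ, true_and] at hℓ₀ hmin
        refine ⟨τ ℓ₀ + η (s ℓ₀) - η (t ℓ₀), ℓ₀, Or.inr ⟨hℓ₀.2, hℓ₀.1⟩, ?_, ?_⟩
        · simp [hℓ₀.1, hℓ₀.2]
        · intro ℓ
          have h0 : 0 ≤ τ ℓ₀ + η (s ℓ₀) - η (t ℓ₀) := hpos ℓ₀
          by_cases hsl : s ℓ ∈ S η <;> by_cases htl : t ℓ ∈ S η <;>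
            simp [hsl, htl]
          · linarith [hpos ℓ]
          · linarith [hpos ℓ]
          · linarith [hmin ℓ ⟨hsl, htl⟩]
          · linarith [hpos ℓ]
      · -- no in-links; use an out-link
        obtain ⟨ℓ₁, hor⟩ := cross
        have hout : (Finset.univ.filter (fun ℓ => s ℓ ∈ S η ∧ t ℓ ∉ S η)).Nonempty := by
          rcases hor with h | ⟨ht, hs⟩
          · exact ⟨ℓ₁, by simp [h.1, h.2]⟩
          · exact absurd ⟨ℓ₁, by simp [hs, ht]⟩ hin
        obtain ⟨ℓ₀, hℓ₀, hmin⟩ := Finset.exists_min_image _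
          (fun ℓ => τ ℓ + η (s ℓ) - η (t ℓ)) hout
        simp only [Finset.mem_filter, Finset.mem_univ, true_and] at hℓ₀ hmin
        refine ⟨-(τ ℓ₀ + η (s ℓ₀) - η (t ℓ₀)), ℓ₀, Or.inl ⟨hℓ₀.1, hℓ₀.2⟩, ?_, ?_⟩
        · simp [hℓ₀.1, hℓ₀.2]
        · intro ℓ
          have h0 : 0 ≤ τ ℓ₀ + η (s ℓ₀) - η (t ℓ₀) := hpos ℓ₀
          by_cases hsl : s ℓ ∈ S η <;> by_cases htl : t ℓ ∈ S η <;>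
            simp [hsl, htl]
          · linarith [hpos ℓ]
          · linarith [hmin ℓ ⟨hsl, htl⟩]
          · exfalso; exact hin ⟨ℓ, by simp [hsl, htl]⟩
          · linarith [hpos ℓ]
    set η' : V → ℝ := fun v => η v + (if v ∈ S η then c else 0) with hη'def
    have hτ' : ∀ ℓ, τ ℓ + η' (s ℓ) - η' (t ℓ)
        = τ ℓ + η (s ℓ) - η (t ℓ)
          + ((if s ℓ ∈ S η then c else 0) - (if t ℓ ∈ S η then c else 0)) := by
      intro ℓ; simp [hη'def]; ring
    refine ⟨η', fun ℓ => by rw [hτ' ℓ]; exact hc ℓ, ?_⟩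
    -- old reachability is preserved
    have hpres : ∀ v, v ∈ S η → v ∈ S η' := by
      intro v hv
      rw [hmemS] at hv ⊢
      induction hv with
      | refl => exact .refl
      | tail hsteps hstep ih =>
        rename_i a b2
        have haS : a ∈ S η := (hmemS η a).2 hsteps
        have hbS : b2 ∈ S η := hclosed η a b2 haS hstep
        obtain ⟨ℓ, hz, hor⟩ := hstep
        have hsS : s ℓ ∈ S η ∧ t ℓ ∈ S η := by
          rcases hor with ⟨hs, ht⟩ | ⟨hs, ht⟩
          · exact ⟨hs ▸ haS, ht ▸ hbS⟩
          · exact ⟨hs ▸ hbS, ht ▸ haS⟩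
        have hz' : τ ℓ + η' (s ℓ) - η' (t ℓ) = 0 := by
          rw [hτ' ℓ]; simp [hsS.1, hsS.2, hz]
        exact ih.tail ⟨ℓ, hz', hor⟩
    -- the tightened link adds a new vertex
    have hℓ₀z : R η' (s ℓ₀) (t ℓ₀) :=
      ⟨ℓ₀, by show τ ℓ₀ + η' (s ℓ₀) - η' (t ℓ₀) = 0; rw [hτ' ℓ₀]; exact hℓ₀tight, Or.inl ⟨rfl, rfl⟩⟩
    obtain ⟨w, hwold, hwnew⟩ : ∃ w, w ∉ S η ∧ w ∈ S η' := by
      rcases hℓ₀cross with ⟨hs, ht⟩ | ⟨ht, hs⟩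
      · exact ⟨t ℓ₀, ht, hclosed η' _ _ (hpres _ hs) hℓ₀z⟩
      · exact ⟨s ℓ₀, hs, hclosed η' _ _ (hpres _ ht) (hRsymm η' hℓ₀z)⟩
    have hsub : S η ⊆ S η' := fun v hv => hpres v hv
    exact Finset.card_lt_card (Finset.ssubset_iff_of_subset hsub |>.2 ⟨w, hwnew, hwold⟩)
  -- main induction on the deficiency
  have main : ∀ n : ℕ, ∀ η : V → ℝ, (∀ ℓ, 0 ≤ τ ℓ + η (s ℓ) - η (t ℓ)) →
      Fintype.card V ≤ (S η).card + n →
      ∃ η : V → ℝ,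
        (∀ ℓ, 0 ≤ τ ℓ + η (s ℓ) - η (t ℓ)) ∧
        (∀ a b : V, Relation.ReflTransGen
          (linkRel s t (fun ℓ => τ ℓ + η (s ℓ) - η (t ℓ) = 0)) a b) := by
    intro n
    induction n with
    | zero =>
      intro η hpos hcard
      have huniv : S η = Finset.univ := by
        apply Finset.eq_univ_of_card
        have := Finset.card_le_univ (S η)
        omega
      refine ⟨η, hpos, fun a b => ?_⟩
      have ha : Relation.ReflTransGen (R η) v₀ a :=
        (hmemS η a).1 (huniv ▸ Finset.mem_univ a)
      have hb : Relation.ReflTransGen (R η) v₀ b :=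
        (hmemS η b).1 (huniv ▸ Finset.mem_univ b)
      exact ((haveI : Std.Symm (R η) := ⟨fun a b h => hRsymm η h⟩; Std.Symm.symm v₀ a ha) : Relation.ReflTransGen (R η) a v₀).trans hb
    | succ n ih =>
      intro η hpos hcard
      by_cases huniv : S η = Finset.univ
      · exact ih η hpos (by rw [huniv, Finset.card_univ]; omega)
      · obtain ⟨η', hpos', hlt⟩ := step η hpos huniv
        exact ih η' hpos' (by omega)
  exact main (Fintype.card V) (fun _ => 0) (fun ℓ => by simpa using hτ ℓ) (by omega)
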